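/- arXiv:2108.09859 — 2 statements merged into one kernel-verified Lean document; each statement's English description precedes it below -/
import Mathlib

section
/- Singular value thresholding solves the nuclear-norm proximal problem: if A = P Σ Vᵀ is a singular value decomposition of A ∈ ℝ^{m×n} with Σ = diag(σ₁,…,σ_r), then the unique minimizer of X ↦ ½‖X − A‖_F² + ρ‖X‖₊ is P diag((σ₁ − ρ)₊, …, (σ_r − ρ)₊) Vᵀ. -/
open Matrix

/-- The singular values of a real `m × n` matrix: square roots of the eigenvalues of `Aᵀ A`. -/
noncomputable def singularValues {m n : ℕ} (A : Matrix (Fin m) (Fin n) ℝ) : Fin n → ℝ :=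
  fun i => Real.sqrt ((Matrix.isHermitian_conjTranspose_mul_self A).eigenvalues i)

/-- The nuclear norm: the sum of the singular values. -/
noncomputable def nuclearNorm {m n : ℕ} (A : Matrix (Fin m) (Fin n) ℝ) : ℝ :=
  ∑ i, singularValues A i

lemma dot_self_nonneg {k : ℕ} (x : Fin k → ℝ) : 0 ≤ x ⬝ᵥ x :=
  Finset.sum_nonneg fun _ _ => mul_self_nonneg _

lemma dot_cs {k : ℕ} (x y : Fin k → ℝ) : (x ⬝ᵥ y) ^ 2 ≤ (x ⬝ᵥ x) * (y ⬝ᵥ y) := by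
  simpa [dotProduct, sq] using Finset.sum_mul_sq_le_sq_mul_sq Finset.univ x y

lemma proj_bound {k : ℕ} (Q : Matrix (Fin k) (Fin k) ℝ) (hsym : Qᵀ = Q) (hidem : Q * Q = Q)
    (x : Fin k → ℝ) : x ⬝ᵥ (Q *ᵥ x) ≤ x ⬝ᵥ x := by
  have h1 : x ⬝ᵥ (Q *ᵥ x) = (Q *ᵥ x) ⬝ᵥ (Q *ᵥ x) := by
    conv_lhs => rw [← hidem, ← mulVec_mulVec, dotProduct_mulVec]
    congr 1
    rw [← mulVec_transpose, hsym]
  have h2 := dot_cs x (Q *ᵥ x)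
  have h3 := dot_self_nonneg x
  have h4 := dot_self_nonneg (Q *ᵥ x)
  nlinarith [h1, h2, h3, h4]

lemma spectral_setup {m n : ℕ} (X : Matrix (Fin m) (Fin n) ℝ) :
    ∃ W : Matrix (Fin n) (Fin n) ℝ, Wᵀ * W = 1 ∧ W * Wᵀ = 1 ∧
      Wᵀ * (Xᵀ * X) * W
        = Matrix.diagonal (fun j => (Matrix.isHermitian_conjTranspose_mul_self X).eigenvalues j) := by
  have hH := Matrix.isHermitian_conjTranspose_mul_self X
  obtain ⟨U, hU⟩ : ∃ U : Matrix (Fin n) (Fin n) ℝ,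
      (hH.eigenvectorUnitary : Matrix (Fin n) (Fin n) ℝ) = U := ⟨_, rfl⟩
  have hstar : star U = Uᵀ := by
    rw [star_eq_conjTranspose, conjTranspose_eq_transpose_of_trivial]
  have h1 : Uᵀ * U = 1 := by
    rw [← hstar, ← hU]; exact (Matrix.mem_unitaryGroup_iff').mp hH.eigenvectorUnitary.2
  have h2 : U * Uᵀ = 1 := by
    rw [← hstar, ← hU]; exact (Matrix.mem_unitaryGroup_iff).mp hH.eigenvectorUnitary.2
  have hs : Xᵀ * X = U * Matrix.diagonal (fun j => hH.eigenvalues j) * Uᵀ := by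
    have h0 := hH.spectral_theorem
    simp only [Unitary.conjStarAlgAut_apply, Unitary.coe_star] at h0
    rw [hU, hstar, RCLike.ofReal_real_eq_id, Function.id_comp] at h0
    calc Xᵀ * X = Xᴴ * X := by rw [conjTranspose_eq_transpose_of_trivial]
      _ = _ := h0
  refine ⟨U, h1, h2, ?_⟩
  rw [hs, ← Matrix.mul_assoc, ← Matrix.mul_assoc, h1, Matrix.one_mul, Matrix.mul_assoc, h1,
    Matrix.mul_one]

lemma trace_le_nuclear {m n : ℕ} (G X : Matrix (Fin m) (Fin n) ℝ)
    (hG : ∀ v : Fin n → ℝ, (G *ᵥ v) ⬝ᵥ (G *ᵥ v) ≤ v ⬝ᵥ v) :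
    Matrix.trace (Gᵀ * X) ≤ nuclearNorm X := by
  obtain ⟨W, hWW, hWWt, hdiag⟩ := spectral_setup X
  set lam := fun j => (Matrix.isHermitian_conjTranspose_mul_self X).eigenvalues j with hlam
  have hlam0 : ∀ j, 0 ≤ lam j := fun j => Matrix.eigenvalues_conjTranspose_mul_self_nonneg X j
  set w : Fin n → Fin n → ℝ := fun j a => W a j with hw
  have hcol : ∀ {k : ℕ} (M : Matrix (Fin k) (Fin n) ℝ) (j : Fin n) (a : Fin k),
      (M * W) a j = (M *ᵥ w j) a := by
    intro k M j a; simp [Matrix.mul_apply, Matrix.mulVec, dotProduct, hw]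
  have hXW : (X * W)ᵀ * (X * W) = Matrix.diagonal lam := by
    rw [Matrix.transpose_mul, Matrix.mul_assoc, ← Matrix.mul_assoc Xᵀ X W,
      ← Matrix.mul_assoc Wᵀ (Xᵀ * X) W] at *
    exact hdiag
  have hXw : ∀ j, (X *ᵥ w j) ⬝ᵥ (X *ᵥ w j) = lam j := by
    intro j
    have e : ((X * W)ᵀ * (X * W)) j j = lam j := by rw [hXW]; simp
    rw [← e, Matrix.mul_apply]
    simp only [Matrix.transpose_apply, dotProduct]
    exact Finset.sum_congr rfl fun a _ => by rw [hcol X j a]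
  have hww1 : ∀ j, w j ⬝ᵥ w j = 1 := by
    intro j
    have e : (Wᵀ * W) j j = (1 : Matrix (Fin n) (Fin n) ℝ) j j := by rw [hWW]
    rw [Matrix.one_apply_eq] at e
    rw [← e, Matrix.mul_apply]
    simp [dotProduct, hw]
  have htr : Matrix.trace (Gᵀ * X) = ∑ j, (G *ᵥ w j) ⬝ᵥ (X *ᵥ w j) := by
    calc Matrix.trace (Gᵀ * X) = Matrix.trace ((Gᵀ * X) * (W * Wᵀ)) := by
          rw [hWWt, Matrix.mul_one]
      _ = Matrix.trace (Wᵀ * ((Gᵀ * X) * W)) := by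
          rw [← Matrix.mul_assoc, Matrix.trace_mul_comm]
      _ = Matrix.trace ((G * W)ᵀ * (X * W)) := by
          simp only [Matrix.transpose_mul, Matrix.mul_assoc]
      _ = ∑ j, (G *ᵥ w j) ⬝ᵥ (X *ᵥ w j) := by
          rw [Matrix.trace]
          refine Finset.sum_congr rfl fun j _ => ?_
          rw [Matrix.diag_apply, Matrix.mul_apply]
          simp only [Matrix.transpose_apply, dotProduct]
          exact Finset.sum_congr rfl fun a _ => by rw [hcol G j a, hcol X j a]
  rw [htr]
  have : nuclearNorm X = ∑ j, Real.sqrt (lam j) := by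
    simp [nuclearNorm, singularValues, hlam]
  rw [this]
  refine Finset.sum_le_sum fun j _ => ?_
  have c1 := dot_cs (G *ᵥ w j) (X *ᵥ w j)
  have c2 := hG (w j)
  rw [hww1 j] at c2
  have c3 := dot_self_nonneg (G *ᵥ w j)
  rw [hXw j] at c1
  nlinarith [Real.sq_sqrt (hlam0 j), Real.sqrt_nonneg (lam j), hlam0 j]

lemma nuclear_le_sum {m n r : ℕ} (P : Matrix (Fin m) (Fin r) ℝ) (V : Matrix (Fin n) (Fin r) ℝ)
    (τ : Fin r → ℝ) (hP : Pᵀ * P = 1) (hV : Vᵀ * V = 1) (hτ : ∀ i, 0 ≤ τ i) :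
    nuclearNorm (P * Matrix.diagonal τ * Vᵀ) ≤ ∑ i, τ i := by
  set X := P * Matrix.diagonal τ * Vᵀ with hX
  obtain ⟨W, hWW, hWWt, hdiag⟩ := spectral_setup X
  set lam := fun j => (Matrix.isHermitian_conjTranspose_mul_self X).eigenvalues j with hlam
  have hlam0 : ∀ j, 0 ≤ lam j := fun j => Matrix.eigenvalues_conjTranspose_mul_self_nonneg X j
  set w : Fin n → Fin n → ℝ := fun j a => W a j with hw
  have hcol : ∀ {k : ℕ} (M : Matrix (Fin k) (Fin n) ℝ) (j : Fin n) (a : Fin k),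
      (M * W) a j = (M *ᵥ w j) a := by
    intro k M j a; simp [Matrix.mul_apply, Matrix.mulVec, dotProduct, hw]
  have hXW : (X * W)ᵀ * (X * W) = Matrix.diagonal lam := by
    rw [Matrix.transpose_mul, Matrix.mul_assoc, ← Matrix.mul_assoc Xᵀ X W,
      ← Matrix.mul_assoc Wᵀ (Xᵀ * X) W]
    exact hdiag
  have hXwk : ∀ j k, (X *ᵥ w j) ⬝ᵥ (X *ᵥ w k) = Matrix.diagonal lam j k := by
    intro j k
    have e : ((X * W)ᵀ * (X * W)) j k = Matrix.diagonal lam j k := by rw [hXW]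
    rw [← e, Matrix.mul_apply]
    simp only [Matrix.transpose_apply, dotProduct]
    exact Finset.sum_congr rfl fun a _ => by rw [hcol X j a, hcol X k a]
  -- the left singular vectors
  set h : Fin n → Fin m → ℝ :=
    fun j => if lam j = 0 then 0 else (Real.sqrt (lam j))⁻¹ • (X *ᵥ w j) with hh
  have hsqrt : ∀ j, Real.sqrt (lam j) = h j ⬝ᵥ (X *ᵥ w j) := by
    intro j
    by_cases hj : lam j = 0
    · simp [hh, hj]
    · have e := hXwk j j
      rw [Matrix.diagonal_apply_eq] at e
      have hs : Real.sqrt (lam j) ≠ 0 := by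
        simp [Real.sqrt_eq_zero (hlam0 j)]; exact hj
      simp only [hh, if_neg hj, smul_dotProduct, smul_eq_mul, e]
      rw [← Real.mul_self_sqrt (hlam0 j)]
      field_simp
      rw [Real.sqrt_sq (Real.sqrt_nonneg _)]
  have hnn : nuclearNorm X = ∑ j, h j ⬝ᵥ (X *ᵥ w j) := by
    simp only [nuclearNorm, singularValues]
    exact Finset.sum_congr rfl fun j _ => hsqrt j
  -- H matrix and its projection property
  set H : Matrix (Fin m) (Fin n) ℝ := fun a j => h j a with hH
  set E : Fin n → ℝ := fun j => if lam j = 0 then 0 else 1 with hE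
  have hHH : Hᵀ * H = Matrix.diagonal E := by
    ext j k
    rw [Matrix.mul_apply]
    simp only [Matrix.transpose_apply]
    by_cases hj : lam j = 0
    · have hzero : ∀ a, h j a = 0 := by intro a; simp [hh, hj]
      rw [Finset.sum_eq_zero (fun a _ => by show h j a * h k a = 0; rw [hzero a, zero_mul]), Matrix.diagonal_apply]
      split_ifs with hjk
      · subst hjk; simp [hE, hj]
      · rfl
    · by_cases hk : lam k = 0
      · have hzero : ∀ a, h k a = 0 := by intro a; simp [hh, hk]
        rw [Finset.sum_eq_zero (fun a _ => by show h j a * h k a = 0; rw [hzero a, mul_zero]), Matrix.diagonal_apply]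
        split_ifs with hjk
        · subst hjk; exact absurd hk hj
        · rfl
      · have e : (∑ a, h j a * h k a)
            = (Real.sqrt (lam j))⁻¹ * (Real.sqrt (lam k))⁻¹ * ((X *ᵥ w j) ⬝ᵥ (X *ᵥ w k)) := by
          simp only [hh, if_neg hj, if_neg hk, dotProduct, Pi.smul_apply, smul_eq_mul,
            Finset.mul_sum]
          exact Finset.sum_congr rfl fun a _ => by ring
        show (∑ a, h j a * h k a) = _
        rw [e, hXwk j k]
        by_cases hjk : j = k
        · subst hjk
          rw [Matrix.diagonal_apply_eq, Matrix.diagonal_apply_eq]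
          have hs : Real.sqrt (lam j) ≠ 0 := by
            simp [Real.sqrt_eq_zero (hlam0 j)]; exact hj
          rw [hE]; simp only [if_neg hj]
          rw [← Real.mul_self_sqrt (hlam0 j)]
          field_simp
          rw [Real.sqrt_sq (Real.sqrt_nonneg _)]
        · rw [Matrix.diagonal_apply_ne _ hjk, Matrix.diagonal_apply_ne _ hjk, mul_zero]
  have hHE : H * Matrix.diagonal E = H := by
    ext a j
    rw [Matrix.mul_diagonal]
    by_cases hj : lam j = 0
    · simp [hE, hj, hH, hh]
    · simp [hE, hj]
  have hQsym : (H * Hᵀ)ᵀ = H * Hᵀ := by rw [Matrix.transpose_mul, Matrix.transpose_transpose]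
  have hQidem : (H * Hᵀ) * (H * Hᵀ) = H * Hᵀ := by
    rw [Matrix.mul_assoc, ← Matrix.mul_assoc Hᵀ H Hᵀ, hHH, ← Matrix.mul_assoc, hHE]
  -- coefficient matrices
  have hterm : ∀ j, h j ⬝ᵥ (X *ᵥ w j)
      = ∑ i, τ i * ((Pᵀ *ᵥ h j) i * (Vᵀ *ᵥ w j) i) := by
    intro j
    have e1 : X *ᵥ w j = P *ᵥ (Matrix.diagonal τ *ᵥ (Vᵀ *ᵥ w j)) := by
      rw [hX, ← Matrix.mulVec_mulVec, ← Matrix.mulVec_mulVec]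
    rw [e1, Matrix.dotProduct_mulVec, ← Matrix.mulVec_transpose]
    simp only [dotProduct, Matrix.mulVec_diagonal]
    exact Finset.sum_congr rfl fun i _ => by ring
  have hb : ∀ i, (∑ j, ((Vᵀ *ᵥ w j) i)^2) = 1 := by
    intro i
    have hmat : (Vᵀ * W) * (Vᵀ * W)ᵀ = 1 := by
      rw [Matrix.transpose_mul, Matrix.transpose_transpose, Matrix.mul_assoc,
        ← Matrix.mul_assoc W Wᵀ V, hWWt, Matrix.one_mul, hV]
    have e : ((Vᵀ * W) * (Vᵀ * W)ᵀ) i i = 1 := by rw [hmat, Matrix.one_apply_eq]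
    rw [← e, Matrix.mul_apply]
    refine Finset.sum_congr rfl fun j _ => ?_
    simp only [Matrix.transpose_apply, sq]
    rw [hcol Vᵀ j i]
  have ha : ∀ i, (∑ j, ((Pᵀ *ᵥ h j) i)^2) ≤ 1 := by
    intro i
    have hcolH : ∀ j, (Pᵀ * H) i j = (Pᵀ *ᵥ h j) i := by
      intro j; simp [Matrix.mul_apply, Matrix.mulVec, dotProduct, hH]; rfl
    have e : (∑ j, ((Pᵀ *ᵥ h j) i)^2) = ((Pᵀ * H) * (Pᵀ * H)ᵀ) i i := by
      rw [Matrix.mul_apply]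
      refine (Finset.sum_congr rfl fun j _ => ?_).symm
      simp only [Matrix.transpose_apply, sq]
      rw [hcolH j]
    rw [e]
    have e2 : (Pᵀ * H) * (Pᵀ * H)ᵀ = Pᵀ * (H * Hᵀ) * P := by
      rw [Matrix.transpose_mul, Matrix.transpose_transpose, Matrix.mul_assoc, Matrix.mul_assoc,
        ← Matrix.mul_assoc H Hᵀ P, ← Matrix.mul_assoc]
    rw [e2]
    set p : Fin m → ℝ := fun a => P a i with hp
    have e3 : (Pᵀ * (H * Hᵀ) * P) i i = p ⬝ᵥ ((H * Hᵀ) *ᵥ p) := by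
      rw [Matrix.mul_apply]
      simp only [dotProduct, Matrix.mulVec, dotProduct, Matrix.mul_apply,
        Matrix.transpose_apply, Finset.sum_mul, Finset.mul_sum]
      rw [Finset.sum_comm]
      refine Finset.sum_congr rfl fun a _ => Finset.sum_congr rfl fun b _ =>
        Finset.sum_congr rfl fun x _ => by simp only [hp]; ring
    have e4 : p ⬝ᵥ p = 1 := by
      have : (Pᵀ * P) i i = 1 := by rw [hP, Matrix.one_apply_eq]
      rw [← this, Matrix.mul_apply]
      simp [dotProduct, hp]
    rw [e3]
    calc p ⬝ᵥ ((H * Hᵀ) *ᵥ p) ≤ p ⬝ᵥ p := proj_bound _ hQsym hQidem p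
      _ = 1 := e4
  -- put it together
  rw [hnn]
  have e5 : (∑ j, h j ⬝ᵥ (X *ᵥ w j))
      = ∑ i, τ i * (∑ j, (Pᵀ *ᵥ h j) i * (Vᵀ *ᵥ w j) i) := by
    rw [Finset.sum_congr rfl fun j _ => hterm j, Finset.sum_comm]
    exact Finset.sum_congr rfl fun i _ => by rw [Finset.mul_sum]
  rw [e5]
  refine Finset.sum_le_sum fun i _ => ?_
  have hcs := Finset.sum_mul_sq_le_sq_mul_sq Finset.univ
    (fun j => (Pᵀ *ᵥ h j) i) (fun j => (Vᵀ *ᵥ w j) i)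
  rw [hb i] at hcs
  have h1 : (∑ j, (Pᵀ *ᵥ h j) i * (Vᵀ *ᵥ w j) i) ≤ 1 := by
    nlinarith [ha i, hcs, Finset.sum_nonneg (fun j (_ : j ∈ Finset.univ) =>
      sq_nonneg ((Pᵀ *ᵥ h j) i))]
  calc τ i * (∑ j, (Pᵀ *ᵥ h j) i * (Vᵀ *ᵥ w j) i) ≤ τ i * 1 :=
      mul_le_mul_of_nonneg_left h1 (hτ i)
    _ = τ i := mul_one _

lemma op_bound {m n r : ℕ} (P : Matrix (Fin m) (Fin r) ℝ) (V : Matrix (Fin n) (Fin r) ℝ)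
    (d : Fin r → ℝ) (hP : Pᵀ * P = 1) (hV : Vᵀ * V = 1)
    (hd0 : ∀ i, 0 ≤ d i) (hd1 : ∀ i, d i ≤ 1) (v : Fin n → ℝ) :
    ((P * Matrix.diagonal d * Vᵀ) *ᵥ v) ⬝ᵥ ((P * Matrix.diagonal d * Vᵀ) *ᵥ v) ≤ v ⬝ᵥ v := by
  have hPz : ∀ z : Fin r → ℝ, (P *ᵥ z) ⬝ᵥ (P *ᵥ z) = z ⬝ᵥ z := by
    intro z
    rw [Matrix.dotProduct_mulVec, Matrix.vecMul_mulVec, hP, Matrix.vecMul_one]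
  have e1 : (P * Matrix.diagonal d * Vᵀ) *ᵥ v
      = P *ᵥ (Matrix.diagonal d *ᵥ (Vᵀ *ᵥ v)) := by
    rw [← Matrix.mulVec_mulVec, ← Matrix.mulVec_mulVec]
  rw [e1, hPz]
  set y := Vᵀ *ᵥ v with hy
  have e2 : (Matrix.diagonal d *ᵥ y) ⬝ᵥ (Matrix.diagonal d *ᵥ y) ≤ y ⬝ᵥ y := by
    simp only [dotProduct, Matrix.mulVec_diagonal]
    refine Finset.sum_le_sum fun i _ => ?_
    nlinarith [mul_le_mul (hd1 i) (hd1 i) (hd0 i) zero_le_one, mul_self_nonneg (y i),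
      hd0 i, hd1 i]
  have e3 : y ⬝ᵥ y = v ⬝ᵥ ((V * Vᵀ) *ᵥ v) := by
    rw [hy, ← Matrix.mulVec_mulVec, Matrix.dotProduct_mulVec, ← Matrix.mulVec_transpose,
      Matrix.transpose_transpose]
    exact dotProduct_comm _ _
  have e4 : v ⬝ᵥ ((V * Vᵀ) *ᵥ v) ≤ v ⬝ᵥ v := by
    refine proj_bound _ ?_ ?_ v
    · rw [Matrix.transpose_mul, Matrix.transpose_transpose]
    · rw [Matrix.mul_assoc, ← Matrix.mul_assoc Vᵀ V Vᵀ, hV, Matrix.one_mul]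
  calc (Matrix.diagonal d *ᵥ y) ⬝ᵥ (Matrix.diagonal d *ᵥ y) ≤ y ⬝ᵥ y := e2
    _ = v ⬝ᵥ ((V * Vᵀ) *ᵥ v) := e3
    _ ≤ v ⬝ᵥ v := e4

lemma ip_eq_trace {m n : ℕ} (G X : Matrix (Fin m) (Fin n) ℝ) :
    ∑ a, ∑ b, G a b * X a b = Matrix.trace (Gᵀ * X) := by
  rw [Matrix.trace]
  simp only [Matrix.diag_apply, Matrix.mul_apply, Matrix.transpose_apply]
  rw [Finset.sum_comm]

/-- singular value thresholding solves the nuclear-norm proximal problem: if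
`A = P (diagonal σ) Vᵀ` is an SVD of `A` (with `P`, `V` having orthonormal columns and `σ ≥ 0`),
then the unique minimizer of `X ↦ ½‖X - A‖_F² + ρ ‖X‖₊` is `P (diagonal (σ - ρ)₊) Vᵀ`. -/
theorem svt_solves_nuclear_prox (m n r : ℕ) (ρ : ℝ) (hρ : 0 < ρ)
    (A : Matrix (Fin m) (Fin n) ℝ)
    (P : Matrix (Fin m) (Fin r) ℝ) (V : Matrix (Fin n) (Fin r) ℝ) (σ : Fin r → ℝ)
    (hP : Pᵀ * P = 1) (hV : Vᵀ * V = 1) (hσ : ∀ i, 0 ≤ σ i)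
    (hA : A = P * Matrix.diagonal σ * Vᵀ) :
    let F : Matrix (Fin m) (Fin n) ℝ → ℝ :=
      fun X => (1 / 2) * (∑ i, ∑ j, (X i j - A i j) ^ 2) + ρ * nuclearNorm X
    let Xstar : Matrix (Fin m) (Fin n) ℝ :=
      P * Matrix.diagonal (fun i => max 0 (σ i - ρ)) * Vᵀ
    (∀ X, F Xstar ≤ F X) ∧ (∀ X, (∀ X', F X ≤ F X') → X = Xstar) := by
  intro F Xstar
  have hF : ∀ X, F X = (1 / 2) * (∑ a, ∑ b, (X a b - A a b) ^ 2) + ρ * nuclearNorm X :=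
    fun _ => rfl
  set τ : Fin r → ℝ := fun i => max 0 (σ i - ρ) with hτdef
  set d : Fin r → ℝ := fun i => min (σ i) ρ / ρ with hddef
  have hτ0 : ∀ i, 0 ≤ τ i := fun i => le_max_left _ _
  have hd0 : ∀ i, 0 ≤ d i := fun i => div_nonneg (le_min (hσ i) hρ.le) hρ.le
  have hd1 : ∀ i, d i ≤ 1 := fun i => by
    rw [hddef]; exact (div_le_one hρ).mpr (min_le_right _ _)
  set G : Matrix (Fin m) (Fin n) ℝ := P * Matrix.diagonal d * Vᵀ with hGdef
  have hXs : Xstar = P * Matrix.diagonal τ * Vᵀ := rfl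
  -- A = Xstar + ρ • G
  have hστ : ∀ i, σ i = τ i + ρ * d i := by
    intro i
    rcases le_total (σ i) ρ with hle | hle
    · have h1 : τ i = 0 := max_eq_left (by linarith)
      have h2 : d i = σ i / ρ := by rw [hddef]; simp [min_eq_left hle]
      rw [h1, h2]; field_simp; ring
    · have h1 : τ i = σ i - ρ := max_eq_right (by linarith)
      have h2 : d i = 1 := by
        rw [hddef]; simp only [min_eq_right hle]; field_simp
      rw [h1, h2]; ring
  have hmat : A = Xstar + ρ • G := by
    rw [hA, hXs, hGdef]
    have hdiag : Matrix.diagonal σ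
        = Matrix.diagonal τ + Matrix.diagonal (fun i => ρ * d i) := by
      ext i j
      rcases eq_or_ne i j with rfl | hij
      · simp [hστ i]
      · simp [Matrix.diagonal_apply_ne _ hij]
    rw [hdiag, Matrix.mul_add, Matrix.add_mul]
    congr 1
    have : Matrix.diagonal (fun i => ρ * d i) = ρ • Matrix.diagonal d := by
      rw [← Matrix.diagonal_smul]
      rfl
    rw [this, Matrix.mul_smul, Matrix.smul_mul]
  have hAS : ∀ a b, A a b = Xstar a b + ρ * G a b := by
    intro a b; rw [hmat]; simp [Matrix.add_apply]
  -- quadratic expansion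
  have eq1 : ∀ X : Matrix (Fin m) (Fin n) ℝ,
      (∑ a, ∑ b, (X a b - A a b) ^ 2)
        = (∑ a, ∑ b, (X a b - Xstar a b) ^ 2)
          + (-2 * ρ) * (∑ a, ∑ b, G a b * X a b)
          + (2 * ρ) * (∑ a, ∑ b, G a b * Xstar a b)
          + ρ ^ 2 * (∑ a, ∑ b, (G a b) ^ 2) := by
    intro X
    have eentry : ∀ a b, (X a b - A a b) ^ 2
        = (X a b - Xstar a b) ^ 2 + (-2 * ρ) * (G a b * X a b)
          + (2 * ρ) * (G a b * Xstar a b) + ρ ^ 2 * (G a b) ^ 2 := by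
      intro a b; rw [hAS a b]; ring
    simp only [eentry, Finset.sum_add_distrib, ← Finset.mul_sum]
  have eqS : (∑ a, ∑ b, (Xstar a b - A a b) ^ 2) = ρ ^ 2 * (∑ a, ∑ b, (G a b) ^ 2) := by
    have eentry : ∀ a b, (Xstar a b - A a b) ^ 2 = ρ ^ 2 * (G a b) ^ 2 := by
      intro a b; rw [hAS a b]; ring
    simp only [eentry, ← Finset.mul_sum]
  -- nuclear norm facts
  have hGop : ∀ v : Fin n → ℝ, (G *ᵥ v) ⬝ᵥ (G *ᵥ v) ≤ v ⬝ᵥ v := by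
    rw [hGdef]; exact op_bound P V d hP hV hd0 hd1
  have hL1 : ∀ X : Matrix (Fin m) (Fin n) ℝ,
      (∑ a, ∑ b, G a b * X a b) ≤ nuclearNorm X := by
    intro X; rw [ip_eq_trace]; exact trace_le_nuclear G X hGop
  have hL2 : nuclearNorm Xstar ≤ ∑ i, τ i := by
    rw [hXs]; exact nuclear_le_sum P V τ hP hV hτ0
  have htrS : (∑ a, ∑ b, G a b * Xstar a b) = ∑ i, τ i := by
    rw [ip_eq_trace]
    have hGt : Gᵀ = V * (Matrix.diagonal d * Pᵀ) := by
      rw [hGdef, Matrix.transpose_mul, Matrix.transpose_mul, Matrix.transpose_transpose,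
        Matrix.diagonal_transpose]
    have hprod : Gᵀ * Xstar = V * Matrix.diagonal (fun i => d i * τ i) * Vᵀ := by
      rw [hGt, hXs]
      calc V * (Matrix.diagonal d * Pᵀ) * (P * Matrix.diagonal τ * Vᵀ)
          = V * (Matrix.diagonal d * ((Pᵀ * P) * (Matrix.diagonal τ * Vᵀ))) := by
            simp only [Matrix.mul_assoc]
        _ = V * (Matrix.diagonal d * (Matrix.diagonal τ * Vᵀ)) := by
            rw [hP, Matrix.one_mul]
        _ = V * Matrix.diagonal (fun i => d i * τ i) * Vᵀ := by
            rw [← Matrix.mul_assoc (Matrix.diagonal d), Matrix.diagonal_mul_diagonal,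
              Matrix.mul_assoc]
    rw [hprod]
    have : Matrix.trace (V * Matrix.diagonal (fun i => d i * τ i) * Vᵀ)
        = Matrix.trace (Matrix.diagonal (fun i => d i * τ i)) := by
      rw [Matrix.trace_mul_comm, ← Matrix.mul_assoc, hV, Matrix.one_mul]
    rw [this, Matrix.trace_diagonal]
    refine Finset.sum_congr rfl fun i _ => ?_
    rcases le_or_gt (σ i) ρ with hle | hlt
    · have h1 : τ i = 0 := max_eq_left (by linarith)
      rw [h1, mul_zero]
    · have h2 : d i = 1 := by
        rw [hddef]; simp only [min_eq_right hlt.le]; field_simp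
      rw [h2, one_mul]
  -- the key strengthened inequality
  have key : ∀ X : Matrix (Fin m) (Fin n) ℝ,
      F Xstar + (1 / 2) * (∑ a, ∑ b, (X a b - Xstar a b) ^ 2) ≤ F X := by
    intro X
    rw [hF X, hF Xstar, eq1 X, eqS]
    have b1 := hL1 X
    have b2 := hL2
    have b3 := htrS
    nlinarith [mul_le_mul_of_nonneg_left b1 hρ.le, mul_le_mul_of_nonneg_left b2 hρ.le]
  clear_value F Xstar
  constructor
  · intro X
    have h1 := key X
    have h2 : (0 : ℝ) ≤ ∑ a, ∑ b, (X a b - Xstar a b) ^ 2 :=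
      Finset.sum_nonneg fun a _ => Finset.sum_nonneg fun b _ => sq_nonneg _
    linarith
  · intro X hmin
    have h1 := hmin Xstar
    have h2 := key X
    have h3 : (∑ a, ∑ b, (X a b - Xstar a b) ^ 2) ≤ 0 := by linarith
    have h4 : (∑ a, ∑ b, (X a b - Xstar a b) ^ 2) = 0 :=
      le_antisymm h3 (Finset.sum_nonneg fun a _ => Finset.sum_nonneg fun b _ => sq_nonneg _)
    ext a b
    have h5 := (Finset.sum_eq_zero_iff_of_nonneg
      (fun a _ => Finset.sum_nonneg fun b _ => sq_nonneg ((X a b - Xstar a b)))).mp h4 a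
      (Finset.mem_univ a)
    have h6 := (Finset.sum_eq_zero_iff_of_nonneg
      (fun b _ => sq_nonneg (X a b - Xstar a b))).mp h5 b (Finset.mem_univ b)
    have := sq_eq_zero_iff.mp h6
    linarith [this]
end

section
/- Proximal gradient descent with constant step size 1/L converges at rate O(1/t): if F = f + h with f convex, L-smooth, and h convex continuous, and θ_{t+1} = Prox_{1/L, h}(θ_t − (1/L)∇f(θ_t)), then for any minimizer θ* of F and all t ≥ 1, F(θ_t) − F(θ*) ≤ L‖θ₀ − θ*‖²/(2t). -/
open RealInnerProductSpace

section Aux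
variable {n : ℕ}

lemma pg_hasDerivAt (f : EuclideanSpace ℝ (Fin n) → ℝ) (hf : Differentiable ℝ f)
    (x u : EuclideanSpace ℝ (Fin n)) (s : ℝ) :
    HasDerivAt (fun r : ℝ => f (x + r • u)) ⟪gradient f (x + s • u), u⟫ s := by
  have hc : HasDerivAt (fun r : ℝ => x + r • u) u s := by
    simpa using ((hasDerivAt_id s).smul_const u).const_add x
  have hg : HasFDerivAt f ((InnerProductSpace.toDual ℝ _) (gradient f (x + s • u))) (x + s • u) :=
    hasGradientAt_iff_hasFDerivAt.mp (hf (x + s • u)).hasGradientAt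
  simpa [Function.comp_def] using hg.comp_hasDerivAt s hc

lemma pg_convex_grad (f : EuclideanSpace ℝ (Fin n) → ℝ)
    (hconv : ConvexOn ℝ Set.univ f) (hf : Differentiable ℝ f)
    (x w : EuclideanSpace ℝ (Fin n)) :
    f x + ⟪gradient f x, w - x⟫ ≤ f w := by
  have hgconv : ConvexOn ℝ Set.univ (fun s : ℝ => f (x + s • (w - x))) := by
    have h0 := hconv.comp_affineMap (AffineMap.lineMap x w)
    have heq : (f ∘ ⇑(AffineMap.lineMap x w)) = fun s : ℝ => f (x + s • (w - x)) := by
      funext s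
      simp [Function.comp, AffineMap.lineMap_apply, vsub_eq_sub, vadd_eq_add, add_comm]
    rw [Set.preimage_univ, heq] at h0
    exact h0
  have hderiv : HasDerivAt (fun s : ℝ => f (x + s • (w - x))) ⟪gradient f x, w - x⟫ 0 := by
    simpa using pg_hasDerivAt f hf x (w - x) 0
  have h1 := hgconv.le_slope_of_hasDerivAt (Set.mem_univ (0:ℝ)) (Set.mem_univ (1:ℝ)) one_pos hderiv
  simp only [slope_def_field] at h1
  simp only [zero_smul, add_zero, one_smul, add_sub_cancel] at h1
  have h2 : (f w - f x) / (1 - 0) = f w - f x := by norm_num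
  rw [h2] at h1
  linarith

lemma pg_smooth (L : ℝ) (hL : 0 < L) (f : EuclideanSpace ℝ (Fin n) → ℝ)
    (hf : Differentiable ℝ f)
    (hlip : ∀ x y, ‖gradient f x - gradient f y‖ ≤ L * ‖x - y‖)
    (x u : EuclideanSpace ℝ (Fin n)) :
    f (x + u) ≤ f x + ⟪gradient f x, u⟫ + L / 2 * ‖u‖ ^ 2 := by
  set c0 : ℝ := ⟪gradient f x, u⟫ with hc0
  set ψ : ℝ → ℝ := fun s => L * ‖u‖ ^ 2 / 2 * s ^ 2 + c0 * s - f (x + s • u) with hψ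
  have hd : ∀ s : ℝ, HasDerivAt ψ (L * ‖u‖ ^ 2 * s + c0 - ⟪gradient f (x + s • u), u⟫) s := by
    intro s
    have h1 : HasDerivAt (fun s : ℝ => L * ‖u‖ ^ 2 / 2 * s ^ 2) (L * ‖u‖ ^ 2 * s) s := by
      have := (hasDerivAt_pow 2 s).const_mul (L * ‖u‖ ^ 2 / 2)
      refine this.congr_deriv ?_
      norm_num; ring
    have h2 : HasDerivAt (fun s : ℝ => c0 * s) c0 s := by
      simpa using (hasDerivAt_id s).const_mul c0
    exact (h1.add h2).sub (pg_hasDerivAt f hf x u s)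
  have hdiff : Differentiable ℝ ψ := fun s => (hd s).differentiableAt
  have hmono : MonotoneOn ψ (Set.Icc 0 1) := by
    apply monotoneOn_of_deriv_nonneg (convex_Icc 0 1) hdiff.continuous.continuousOn
      hdiff.differentiableOn
    intro s hs
    rw [interior_Icc] at hs
    rw [(hd s).deriv]
    have h3 : ⟪gradient f (x + s • u) - gradient f x, u⟫ ≤ L * s * ‖u‖ ^ 2 := by
      calc ⟪gradient f (x + s • u) - gradient f x, u⟫
          ≤ ‖gradient f (x + s • u) - gradient f x‖ * ‖u‖ := real_inner_le_norm _ _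
        _ ≤ (L * ‖x + s • u - x‖) * ‖u‖ :=
            mul_le_mul_of_nonneg_right (hlip _ _) (norm_nonneg _)
        _ = L * s * ‖u‖ ^ 2 := by
            rw [add_sub_cancel_left, norm_smul, Real.norm_eq_abs, abs_of_nonneg hs.1.le]
            ring
    rw [inner_sub_left] at h3
    linarith
  have h01 := hmono (Set.mem_Icc.mpr ⟨le_refl 0, zero_le_one⟩)
    (Set.mem_Icc.mpr ⟨zero_le_one, le_refl 1⟩) zero_le_one
  have hψ0 : ψ 0 = -f x := by simp [hψ]
  have hψ1 : ψ 1 = L * ‖u‖ ^ 2 / 2 + c0 - f (x + u) := by simp [hψ]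
  rw [hψ0, hψ1] at h01
  linarith

lemma pg_combo (p q : EuclideanSpace ℝ (Fin n)) (s : ℝ) :
    ‖(1 - s) • p + s • q‖ ^ 2
      = (1 - s) * ‖p‖ ^ 2 + s * ‖q‖ ^ 2 - s * (1 - s) * ‖p - q‖ ^ 2 := by
  have h : ∀ v : EuclideanSpace ℝ (Fin n), ‖v‖ ^ 2 = ⟪v, v⟫ :=
    fun v => (real_inner_self_eq_norm_sq v).symm
  rw [h, h, h, h]
  simp only [inner_add_left, inner_add_right, inner_sub_left, inner_sub_right,
    real_inner_smul_left, real_inner_smul_right]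
  rw [real_inner_comm q p]
  ring

lemma pg_expand (L : ℝ) (hL : 0 < L) (v x g : EuclideanSpace ℝ (Fin n)) :
    ‖v - (x - (1 / L) • g)‖ ^ 2
      = ‖v - x‖ ^ 2 + 2 / L * ⟪g, v - x⟫ + (1 / L) ^ 2 * ‖g‖ ^ 2 := by
  have h1 : v - (x - (1 / L) • g) = (v - x) + (1 / L) • g := by module
  rw [h1, norm_add_sq_real, real_inner_smul_right, norm_smul, Real.norm_eq_abs,
    abs_of_nonneg (by positivity : (0:ℝ) ≤ 1 / L), real_inner_comm]
  ring

end Aux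
set_option maxHeartbeats 1000000 in
/-- proximal gradient descent with constant step size `1/L` converges at rate
`O(1/t)`: if `F = f + h` with `f` convex and `L`-smooth, `h` convex continuous, and
`θ_{t+1} = Prox_{1/L,h}(θ_t - (1/L)∇f(θ_t))`, then for any minimizer `θ*` of `F` and all
`t ≥ 1`, `F(θ_t) - F(θ*) ≤ L ‖θ₀ - θ*‖² / (2 t)`. -/
theorem prox_grad_convergence (n : ℕ) (L : ℝ) (hL : 0 < L)
    (f h : EuclideanSpace ℝ (Fin n) → ℝ)
    (hf_conv : ConvexOn ℝ Set.univ f) (hf_diff : Differentiable ℝ f)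
    (hf_lip : ∀ x y, ‖gradient f x - gradient f y‖ ≤ L * ‖x - y‖)
    (hh_conv : ConvexOn ℝ Set.univ h) (hh_cont : Continuous h)
    (θstar : EuclideanSpace ℝ (Fin n))
    (hmin : ∀ w, f θstar + h θstar ≤ f w + h w)
    (θ : ℕ → EuclideanSpace ℝ (Fin n))
    (hstep : ∀ t : ℕ, ∀ w,
      (1 / 2) * ‖θ (t + 1) - (θ t - (1 / L) • gradient f (θ t))‖ ^ 2 + (1 / L) * h (θ (t + 1))
        ≤ (1 / 2) * ‖w - (θ t - (1 / L) • gradient f (θ t))‖ ^ 2 + (1 / L) * h w) :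
    ∀ t : ℕ, 1 ≤ t →
      (f (θ t) + h (θ t)) - (f θstar + h θstar) ≤ L * ‖θ 0 - θstar‖ ^ 2 / (2 * t) := by
  have hL0 : L ≠ 0 := ne_of_gt hL
  -- Key one-step inequality
  have key : ∀ t : ℕ, ∀ w,
      (f (θ (t+1)) + h (θ (t+1))) + L/2 * ‖w - θ (t+1)‖^2
        ≤ (f w + h w) + L/2 * ‖w - θ t‖^2 := by
    intro t w
    set x := θ t with hx
    set a := θ (t+1) with ha
    set g := gradient f x with hgdef
    set y := x - (1/L) • g with hy
    -- strong prox inequality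
    have hsp : (1/2)*‖a - y‖^2 + (1/L)*h a + (1/2)*‖w - a‖^2
        ≤ (1/2)*‖w - y‖^2 + (1/L)*h w := by
      set U : ℝ := (1/2)*‖a - y‖^2 + (1/L)*h a with hU
      set V : ℝ := (1/2)*‖w - y‖^2 + (1/L)*h w with hV
      set d : ℝ := ‖w - a‖^2 with hd
      have hd0 : (0:ℝ) ≤ d := by positivity
      have hsmul : ∀ s : ℝ, 0 < s → s ≤ 1 → s*U + s*(1-s)*d/2 ≤ s*V := by
        intro s hs0 hs1
        have hws := hstep t ((1 - s) • a + s • w)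
        rw [← hx, ← ha, ← hgdef, ← hy] at hws
        have heq : (1 - s) • a + s • w - (x - (1/L) • g)
            = (1 - s) • (a - y) + s • (w - y) := by
          rw [hy]; module
        rw [hy] at heq
        rw [heq, pg_combo] at hws
        have hrev : ‖a - y - (w - y)‖^2 = d := by
          have h1 : a - y - (w - y) = a - w := by abel
          rw [h1, hd, norm_sub_rev]
        rw [hrev] at hws
        have hconv := hh_conv.2 (Set.mem_univ a) (Set.mem_univ w)
          (by linarith : (0:ℝ) ≤ 1 - s) hs0.le (by ring)
        have h1L : (0:ℝ) ≤ 1/L := by positivity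
        have hconv2 := mul_le_mul_of_nonneg_left hconv h1L
        simp only [smul_eq_mul] at hconv2
        rw [hU, hV]
        linarith [hws, hconv2]
      clear_value U V d
      by_contra hcon
      push_neg at hcon
      have hδ : 0 < U + d/2 - V := by linarith
      obtain ⟨s, hs0, hs1, hsd⟩ : ∃ s : ℝ, 0 < s ∧ s ≤ 1 ∧ s * (d + 1) ≤ U + d/2 - V := by
        refine ⟨min 1 ((U + d/2 - V)/(d+1)), lt_min one_pos (div_pos hδ (by linarith)),
          min_le_left _ _, ?_⟩
        exact (le_div_iff₀ (by linarith)).mp (min_le_right _ _)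
      have hM := hsmul s hs0 hs1
      linarith [hM, mul_le_mul_of_nonneg_left hsd hs0.le, mul_pos hs0 hs0,
        mul_nonneg (mul_nonneg hs0.le hs0.le) hd0]
    -- expansions
    have e1 : ‖a - y‖^2 = ‖a - x‖^2 + 2/L * ⟪g, a - x⟫ + (1/L)^2*‖g‖^2 := by
      rw [hy]; exact pg_expand L hL a x g
    have e2 : ‖w - y‖^2 = ‖w - x‖^2 + 2/L * ⟪g, w - x⟫ + (1/L)^2*‖g‖^2 := by
      rw [hy]; exact pg_expand L hL w x g
    rw [e1, e2] at hsp
    have hsp' : ‖a - x‖^2/2 + (1/L)*⟪g, a - x⟫ + (1/L)*h a + ‖w - a‖^2/2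
        ≤ ‖w - x‖^2/2 + (1/L)*⟪g, w - x⟫ + (1/L)*h w := by
      have hinv : (1:ℝ)/L * ⟪g, a - x⟫ = 1/2 * (2/L * ⟪g, a - x⟫) := by ring
      have hinv2 : (1:ℝ)/L * ⟪g, w - x⟫ = 1/2 * (2/L * ⟪g, w - x⟫) := by ring
      linarith [hsp]
    have hmulL := mul_le_mul_of_nonneg_left hsp' hL.le
    have hc : ∀ r : ℝ, L * ((1/L) * r) = r := fun r => by field_simp
    have hstep2 : ⟪g, a - x⟫ + h a + L/2 * ‖w - a‖^2 + L/2 * ‖a - x‖^2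
        ≤ ⟪g, w - x⟫ + h w + L/2 * ‖w - x‖^2 := by
      simp only [mul_add, hc] at hmulL
      linarith [hmulL]
    have hdesc : f a ≤ f x + ⟪g, a - x⟫ + L/2 * ‖a - x‖^2 := by
      have h5 := pg_smooth L hL f hf_diff hf_lip x (a - x)
      rw [add_sub_cancel] at h5
      exact h5
    have hcvx : f x + ⟪g, w - x⟫ ≤ f w := pg_convex_grad f hf_conv hf_diff x w
    have hwrev : ‖w - a‖ = ‖a - w‖ := norm_sub_rev _ _
    linarith [hstep2, hdesc, hcvx]
  -- descent
  have descent : ∀ t : ℕ, f (θ (t+1)) + h (θ (t+1)) ≤ f (θ t) + h (θ t) := by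
    intro t
    have hk := key t (θ t)
    simp only [sub_self, norm_zero] at hk
    have hpos : (0:ℝ) ≤ L/2 * ‖θ t - θ (t+1)‖^2 := by positivity
    linarith [hk, hpos]
  -- telescoping induction
  have main : ∀ t : ℕ, (t:ℝ) * ((f (θ t) + h (θ t)) - (f θstar + h θstar))
      + L/2 * ‖θ t - θstar‖^2 ≤ L/2 * ‖θ 0 - θstar‖^2 := by
    intro t
    induction t with
    | zero => simp
    | succ t ih =>
      have hk := key t θstar
      rw [norm_sub_rev θstar (θ (t+1)), norm_sub_rev θstar (θ t)] at hk
      have hmono := descent t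
      have hFmin := hmin (θ (t+1))
      have ht0 : (0:ℝ) ≤ (t:ℝ) := Nat.cast_nonneg t
      have hprod := mul_le_mul_of_nonneg_left
        (sub_le_sub_right hmono (f θstar + h θstar)) ht0
      push_cast
      nlinarith [hk, ih, hprod]
  intro t ht
  have hmt := main t
  have ht0 : (0:ℝ) < (t:ℝ) := by exact_mod_cast Nat.pos_of_ne_zero (by omega)
  rw [le_div_iff₀ (by positivity)]
  have hn : (0:ℝ) ≤ L/2 * ‖θ t - θstar‖^2 := by positivity
  nlinarith [hmt, hn]
end
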